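/- Let d ≥ 2 and m ≥ 2. Let g*_1, …, g*_m be pairwise non-parallel unit vectors in ℝ^d, and suppose the leaders are placed at positions p̄_1, …, p̄_m realizing the negated target bearings: there exists p̄* ∈ ℝ^d with p̄* ≠ p̄_j and (p̄_j − p̄*)/‖p̄_j − p̄*‖ = −g*_j for all j. Consider the follower dynamics ṗ_n = u(x) := −Σ_{j=1}^{m} P_{(p̄_j − x)/‖p̄_j − x‖} g*_j. Then: (i) p̄* = (Σ_j P_{g*_j})^{-1}(Σ_j P_{g*_j} p̄_j) and u(p̄*) = 0; (ii) p̄* is the only point x with x ≠ p̄_j for all j satisfying u(x) = 0; and (iii) for every x ≠ p̄* with x ≠ p̄_j for all j, ⟨x − p̄*, u(x)⟩ > 0, so the distance ‖x − p̄*‖ strictly increases along trajectories and the equilibrium p̄* is unstable. -/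

import Mathlib

open RealInnerProductSpace

section Stmt10Aux

lemma bproj_aux_ne_zero {d : ℕ} (g : EuclideanSpace ℝ (Fin d)) (hg : ‖g‖ = 1) :
    g ≠ 0 := fun h => by simpa [h] using hg

end Stmt10Aux

/-- `bproj g v` is the orthogonal projection of `v` onto the orthogonal
complement of `g`, i.e. `P_g v = v - (⟪g,v⟫/‖g‖²) • g`. -/
noncomputable def bproj {d : ℕ} (g v : EuclideanSpace ℝ (Fin d)) :
    EuclideanSpace ℝ (Fin d) :=
  v - ((⟪g, v⟫ : ℝ) / ‖g‖ ^ 2) • g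

lemma bproj_unit {d : ℕ} (g v : EuclideanSpace ℝ (Fin d)) (hg : ‖g‖ = 1) :
    bproj g v = v - (⟪g, v⟫ : ℝ) • g := by
  simp [bproj, hg]

lemma bproj_smul {d : ℕ} {c : ℝ} (hc : c ≠ 0) (g v : EuclideanSpace ℝ (Fin d)) :
    bproj (c • g) v = bproj g v := by
  rcases eq_or_ne g 0 with rfl | hg
  · simp [bproj]
  · have h1 : ‖g‖ ≠ 0 := norm_ne_zero_iff.mpr hg
    unfold bproj
    congr 1
    rw [real_inner_smul_left, norm_smul, smul_smul, mul_pow, Real.norm_eq_abs, sq_abs]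
    congr 1
    field_simp

lemma bproj_self_smul {d : ℕ} (g : EuclideanSpace ℝ (Fin d)) (c : ℝ) (hg : g ≠ 0) :
    bproj g (c • g) = 0 := by
  have h1 : ‖g‖ ^ 2 ≠ 0 := pow_ne_zero _ (norm_ne_zero_iff.mpr hg)
  unfold bproj
  rw [real_inner_smul_right, real_inner_self_eq_norm_sq, mul_div_assoc, div_self h1,
    mul_one, sub_self]

lemma bproj_sub {d : ℕ} (g a b : EuclideanSpace ℝ (Fin d)) :
    bproj g (a - b) = bproj g a - bproj g b := by
  unfold bproj
  rw [inner_sub_right, sub_div, sub_smul]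
  abel

lemma inner_neg_bproj {d : ℕ} (g y : EuclideanSpace ℝ (Fin d)) (hg : ‖g‖ = 1)
    (r : ℝ) (hv : y + r • g ≠ 0) :
    ⟪y, -(bproj (y + r • g) g)⟫ =
      r * (‖y‖ ^ 2 - ⟪y, g⟫ ^ 2) / ‖y + r • g‖ ^ 2 := by
  set v := y + r • g with hvdef
  have hn : ‖v‖ ^ 2 ≠ 0 := pow_ne_zero _ (norm_ne_zero_iff.mpr hv)
  have h1 : (⟪v, g⟫ : ℝ) = ⟪y, g⟫ + r := by
    rw [hvdef, inner_add_left, real_inner_smul_left, real_inner_self_eq_norm_sq, hg]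
    ring
  have h2 : (⟪y, v⟫ : ℝ) = ‖y‖ ^ 2 + r * ⟪y, g⟫ := by
    rw [hvdef, inner_add_right, real_inner_smul_right, real_inner_self_eq_norm_sq]
  have h3 : ‖v‖ ^ 2 = ‖y‖ ^ 2 + 2 * r * ⟪y, g⟫ + r ^ 2 := by
    rw [hvdef, norm_add_sq_real, real_inner_smul_right, norm_smul, Real.norm_eq_abs,
      mul_pow, sq_abs, hg]
    ring
  rw [bproj, inner_neg_right, inner_sub_right, real_inner_smul_right, h1, h2, h3]
  rw [h3] at hn
  set a : ℝ := (⟪y, g⟫ : ℝ) with ha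
  clear_value a
  generalize hD : ‖y‖ ^ 2 + 2 * r * a + r ^ 2 = D at hn ⊢
  field_simp
  rw [← hD]
  ring

lemma inner_sq_le {d : ℕ} (g v : EuclideanSpace ℝ (Fin d)) (hg : ‖g‖ = 1) :
    (⟪v, g⟫ : ℝ) ^ 2 ≤ ‖v‖ ^ 2 := by
  have h := abs_real_inner_le_norm v g
  rw [hg, mul_one] at h
  calc (⟪v, g⟫ : ℝ) ^ 2 = |(⟪v, g⟫ : ℝ)| ^ 2 := (sq_abs _).symm
    _ ≤ ‖v‖ ^ 2 := pow_le_pow_left₀ (abs_nonneg _) h 2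

lemma eq_smul_of_inner_sq {d : ℕ} (g y : EuclideanSpace ℝ (Fin d)) (hg : ‖g‖ = 1)
    (h : ‖y‖ ^ 2 ≤ ⟪y, g⟫ ^ 2) : y = (⟪y, g⟫ : ℝ) • g := by
  have h2 : ‖y - (⟪y, g⟫ : ℝ) • g‖ ^ 2 = ‖y‖ ^ 2 - ⟪y, g⟫ ^ 2 := by
    rw [norm_sub_sq_real, real_inner_smul_right, norm_smul, Real.norm_eq_abs, mul_pow,
      sq_abs, hg]
    ring
  have h3 : ‖y - (⟪y, g⟫ : ℝ) • g‖ ^ 2 = 0 :=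
    le_antisymm (by rw [h2]; linarith) (by positivity)
  have h4 : y - (⟪y, g⟫ : ℝ) • g = 0 := by
    simpa using (pow_eq_zero_iff (n := 2) (by norm_num)).mp h3
  exact sub_eq_zero.mp h4

lemma exists_inner_sq_lt {d m : ℕ} (hm : 2 ≤ m)
    (gstar : Fin m → EuclideanSpace ℝ (Fin d))
    (hunit : ∀ j, ‖gstar j‖ = 1)
    (hnp : ∀ i j : Fin m, i ≠ j → ∀ c : ℝ, gstar j ≠ c • gstar i)
    (y : EuclideanSpace ℝ (Fin d)) (hy : y ≠ 0) :
    ∃ j, (⟪y, gstar j⟫ : ℝ) ^ 2 < ‖y‖ ^ 2 := by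
  by_contra h
  push_neg at h
  have heq : ∀ j, y = (⟪y, gstar j⟫ : ℝ) • gstar j :=
    fun j => eq_smul_of_inner_sq _ _ (hunit j) (h j)
  have hc : ∀ j, (⟪y, gstar j⟫ : ℝ) ≠ 0 := by
    intro j h0
    exact hy (by rw [heq j, h0, zero_smul])
  set i : Fin m := ⟨0, by omega⟩
  set j : Fin m := ⟨1, by omega⟩
  have hij : i ≠ j := by simp [i, j, Fin.ext_iff]
  obtain ⟨ci, hyi, hci0⟩ : ∃ c : ℝ, y = c • gstar i ∧ c ≠ 0 := ⟨_, heq i, hc i⟩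
  obtain ⟨cj, hyj, hcj0⟩ : ∃ c : ℝ, y = c • gstar j ∧ c ≠ 0 := ⟨_, heq j, hc j⟩
  refine hnp i j hij (cj⁻¹ * ci) ?_
  calc gstar j = cj⁻¹ • y := by rw [hyj, inv_smul_smul₀ hcj0]
    _ = (cj⁻¹ * ci) • gstar i := by rw [hyi, smul_smul]

noncomputable def sumProjMap {d m : ℕ} (gstar : Fin m → EuclideanSpace ℝ (Fin d)) :
    EuclideanSpace ℝ (Fin d) →ₗ[ℝ] EuclideanSpace ℝ (Fin d) :=
  ∑ j, (LinearMap.id -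
    (LinearMap.toSpanSingleton ℝ _ (gstar j)).comp (innerSL ℝ (gstar j)).toLinearMap)

lemma sumProjMap_apply {d m : ℕ} (gstar : Fin m → EuclideanSpace ℝ (Fin d))
    (v : EuclideanSpace ℝ (Fin d)) :
    sumProjMap gstar v = ∑ j, (v - (⟪gstar j, v⟫ : ℝ) • gstar j) := by
  simp only [sumProjMap, LinearMap.sum_apply, LinearMap.sub_apply, LinearMap.id_apply,
    LinearMap.comp_apply, ContinuousLinearMap.coe_coe, innerSL_apply_apply,
    LinearMap.toSpanSingleton_apply]

lemma sumProjMap_inj {d m : ℕ} (hm : 2 ≤ m)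
    (gstar : Fin m → EuclideanSpace ℝ (Fin d))
    (hunit : ∀ j, ‖gstar j‖ = 1)
    (hnp : ∀ i j : Fin m, i ≠ j → ∀ c : ℝ, gstar j ≠ c • gstar i) :
    Function.Injective (sumProjMap gstar) := by
  rw [← LinearMap.ker_eq_bot, LinearMap.ker_eq_bot']
  intro v hv0
  by_contra hvne
  obtain ⟨j0, hj0⟩ := exists_inner_sq_lt hm gstar hunit hnp v hvne
  have hkey : (⟪v, sumProjMap gstar v⟫ : ℝ)
      = ∑ j, (‖v‖ ^ 2 - (⟪v, gstar j⟫ : ℝ) ^ 2) := by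
    rw [sumProjMap_apply, inner_sum]
    refine Finset.sum_congr rfl fun j _ => ?_
    rw [inner_sub_right, real_inner_smul_right, real_inner_self_eq_norm_sq,
      real_inner_comm (gstar j) v]
    ring
  have hpos : 0 < ∑ j, (‖v‖ ^ 2 - (⟪v, gstar j⟫ : ℝ) ^ 2) := by
    refine Finset.sum_pos' (fun j _ => ?_) ⟨j0, Finset.mem_univ _, by linarith⟩
    have := inner_sq_le (gstar j) v (hunit j)
    linarith
  rw [hv0, inner_zero_right] at hkey
  linarith

/-- If the leaders `p̄_1, …, p̄_m` realize the *negated* target bearings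
(`(p̄_j − p̄*)/‖p̄_j − p̄*‖ = −g*_j` for some `p̄*`), with `g*_1, …, g*_m`
pairwise non-parallel unit vectors, then for the follower control
`u(x) = −Σ_j P_{(p̄_j − x)/‖p̄_j − x‖} g*_j`:
(i) `p̄* = (Σ_j P_{g*_j})⁻¹ (Σ_j P_{g*_j} p̄_j)` and `u(p̄*) = 0`;
(ii) `p̄*` is the only zero of `u` away from the leaders;
(iii) `⟪x − p̄*, u(x)⟫ > 0` for all `x ≠ p̄*`, so `p̄*` is unstable. -/
theorem stmt10 (d m : ℕ) (hd : 2 ≤ d) (hm : 2 ≤ m)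
    (gstar : Fin m → EuclideanSpace ℝ (Fin d))
    (hunit : ∀ j, ‖gstar j‖ = 1)
    (hnp : ∀ i j : Fin m, i ≠ j → ∀ c : ℝ, gstar j ≠ c • gstar i)
    (pbar : Fin m → EuclideanSpace ℝ (Fin d))
    (pbarstar : EuclideanSpace ℝ (Fin d))
    (hne : ∀ j, pbarstar ≠ pbar j)
    (hbear : ∀ j, (‖pbar j - pbarstar‖)⁻¹ • (pbar j - pbarstar) = -gstar j) :
    (Function.Bijective
        (fun v : EuclideanSpace ℝ (Fin d) => ∑ j, bproj (gstar j) v) ∧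
      (∑ j, bproj (gstar j) pbarstar) = ∑ j, bproj (gstar j) (pbar j) ∧
      -(∑ j, bproj ((‖pbar j - pbarstar‖)⁻¹ • (pbar j - pbarstar)) (gstar j))
        = 0) ∧
    (∀ x : EuclideanSpace ℝ (Fin d), (∀ j, x ≠ pbar j) →
      -(∑ j, bproj ((‖pbar j - x‖)⁻¹ • (pbar j - x)) (gstar j)) = 0 →
      x = pbarstar) ∧
    (∀ x : EuclideanSpace ℝ (Fin d), (∀ j, x ≠ pbar j) → x ≠ pbarstar →
      0 < ⟪x - pbarstar,
        -(∑ j, bproj ((‖pbar j - x‖)⁻¹ • (pbar j - x)) (gstar j))⟫) := by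
  have hg0 : ∀ j, gstar j ≠ 0 := fun j => bproj_aux_ne_zero _ (hunit j)
  have hrpos : ∀ j, (0 : ℝ) < ‖pbar j - pbarstar‖ := fun j =>
    norm_pos_iff.mpr (sub_ne_zero.mpr (Ne.symm (hne j)))
  have hpb : ∀ j, pbar j - pbarstar = -(‖pbar j - pbarstar‖ • gstar j) := by
    intro j
    calc pbar j - pbarstar
        = ‖pbar j - pbarstar‖ • ((‖pbar j - pbarstar‖)⁻¹ • (pbar j - pbarstar)) :=
          (smul_inv_smul₀ (hrpos j).ne' _).symm
      _ = ‖pbar j - pbarstar‖ • (-gstar j) := by rw [hbear j]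
      _ = -(‖pbar j - pbarstar‖ • gstar j) := smul_neg _ _
  have part3 : ∀ x : EuclideanSpace ℝ (Fin d), (∀ j, x ≠ pbar j) → x ≠ pbarstar →
      0 < ⟪x - pbarstar,
        -(∑ j, bproj ((‖pbar j - x‖)⁻¹ • (pbar j - x)) (gstar j))⟫ := by
    intro x hx hxs
    set y := x - pbarstar with hy
    have hy0 : y ≠ 0 := sub_ne_zero.mpr hxs
    have hw : ∀ j, pbar j - x ≠ 0 := fun j => sub_ne_zero.mpr fun h => hx j h.symm
    have hwv : ∀ j, pbar j - x = -(y + ‖pbar j - pbarstar‖ • gstar j) := by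
      intro j
      calc pbar j - x = (pbar j - pbarstar) - (x - pbarstar) := by abel
        _ = -(‖pbar j - pbarstar‖ • gstar j) - y := by conv_lhs => rw [hpb j]
        _ = -(y + ‖pbar j - pbarstar‖ • gstar j) := by abel
    have hv0 : ∀ j, y + ‖pbar j - pbarstar‖ • gstar j ≠ 0 := by
      intro j h0
      exact hw j (by rw [hwv j, h0, neg_zero])
    have hterm : ∀ j, bproj ((‖pbar j - x‖)⁻¹ • (pbar j - x)) (gstar j)
        = bproj (y + ‖pbar j - pbarstar‖ • gstar j) (gstar j) := by
      intro j
      rw [bproj_smul (inv_ne_zero (norm_ne_zero_iff.mpr (hw j))), hwv j,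
        show -(y + ‖pbar j - pbarstar‖ • gstar j)
            = (-1 : ℝ) • (y + ‖pbar j - pbarstar‖ • gstar j) from (neg_one_smul _ _).symm,
        bproj_smul (by norm_num : (-1 : ℝ) ≠ 0)]
    have hsum : ⟪y, -(∑ j, bproj ((‖pbar j - x‖)⁻¹ • (pbar j - x)) (gstar j))⟫
        = ∑ j, ⟪y, -(bproj (y + ‖pbar j - pbarstar‖ • gstar j) (gstar j))⟫ := by
      rw [inner_neg_right, inner_sum, ← Finset.sum_neg_distrib]
      exact Finset.sum_congr rfl fun j _ => by rw [hterm j, inner_neg_right]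
    rw [hsum]
    refine Finset.sum_pos' (fun j _ => ?_) ?_
    · rw [inner_neg_bproj _ _ (hunit j) _ (hv0 j)]
      have h1 := inner_sq_le (gstar j) y (hunit j)
      exact div_nonneg (mul_nonneg (hrpos j).le (by linarith)) (by positivity)
    · obtain ⟨j0, hj0⟩ := exists_inner_sq_lt hm gstar hunit hnp y hy0
      refine ⟨j0, Finset.mem_univ _, ?_⟩
      rw [inner_neg_bproj _ _ (hunit j0) _ (hv0 j0)]
      have hnp2 : (0 : ℝ) < ‖y + ‖pbar j0 - pbarstar‖ • gstar j0‖ ^ 2 :=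
        pow_pos (norm_pos_iff.mpr (hv0 j0)) 2
      exact div_pos (mul_pos (hrpos j0) (by linarith)) hnp2
  refine ⟨⟨?_, ?_, ?_⟩, ?_, part3⟩
  · have hfun : (fun v : EuclideanSpace ℝ (Fin d) => ∑ j, bproj (gstar j) v)
        = ⇑(sumProjMap gstar) := by
      funext v
      rw [sumProjMap_apply]
      exact Finset.sum_congr rfl fun j _ => bproj_unit _ _ (hunit j)
    rw [hfun]
    have hinj := sumProjMap_inj hm gstar hunit hnp
    exact ⟨hinj, LinearMap.injective_iff_surjective.mp hinj⟩
  · refine Finset.sum_congr rfl fun j _ => ?_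
    have h1 : bproj (gstar j) (pbar j) - bproj (gstar j) pbarstar = 0 := by
      rw [← bproj_sub, hpb j, ← neg_smul]
      exact bproj_self_smul _ _ (hg0 j)
    exact (sub_eq_zero.mp h1).symm
  · have hz : ∀ j, bproj ((‖pbar j - pbarstar‖)⁻¹ • (pbar j - pbarstar)) (gstar j) = 0 := by
      intro j
      rw [hbear j, show -gstar j = (-1 : ℝ) • gstar j from (neg_one_smul _ _).symm,
        bproj_smul (by norm_num : (-1 : ℝ) ≠ 0)]
      simpa using bproj_self_smul (gstar j) 1 (hg0 j)
    rw [Finset.sum_congr rfl fun j _ => hz j]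
    simp
  · intro x hx h0
    by_contra hxs
    have h := part3 x hx hxs
    rw [h0, inner_zero_right] at h
    exact lt_irrefl 0 h
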